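/- Let G be an abelian p-group and H = ⊕ᵢ ⟨zᵢ⟩ a finite subgroup with H ∩ p^ω G = 0 and exp(zᵢ) = eᵢ. If every endomorphism of H extends to an endomorphism of G, then whenever eⱼ ≤ eᵢ one has U(zᵢ) ≤ U(zⱼ) ≤ U(p^{eᵢ−eⱼ}zᵢ) componentwise. -/

import Mathlib

open AddSubgroup

/-- The `p`-height of an element, as an extended natural number. -/
noncomputable def pHeight (p : ℕ) {G : Type*} [AddCommGroup G] (x : G) : ℕ∞ :=
  sSup {n : ℕ∞ | ∃ m : ℕ, n = (m : ℕ∞) ∧ ∃ y : G, p ^ m • y = x}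

/-- `G` is an abelian `p`-group. -/
def IsPGrp (p : ℕ) (G : Type*) [AddCommGroup G] : Prop :=
  ∀ x : G, ∃ n : ℕ, p ^ n • x = 0

/-- `H ∈ Q(G)`: every homomorphism `H → G` extends to an endomorphism of `G`. -/
def InQ {G : Type*} [AddCommGroup G] (H : AddSubgroup G) : Prop :=
  ∀ f : H →+ G, ∃ g : G →+ G, ∀ x : H, g x = f x

/-- `H ∈ P(G)`: every monomorphism `H → G` extends to an endomorphism of `G`. -/
def InP {G : Type*} [AddCommGroup G] (H : AddSubgroup G) : Prop :=
  ∀ f : H →+ G, Function.Injective f → ∃ g : G →+ G, ∀ x : H, g x = f x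

/-- `H ∈ W(G)`: every endomorphism of `H` extends to an endomorphism of `G`. -/
def InW {G : Type*} [AddCommGroup G] (H : AddSubgroup G) : Prop :=
  ∀ f : H →+ H, ∃ g : G →+ G, ∀ x : H, g x = (f x : G)

/-- `K` is an internal direct sum of cyclic subgroups. -/
def IsDirectSumOfCyclics {G : Type*} [AddCommGroup G] (K : AddSubgroup G) : Prop :=
  ∃ (ι : Type) (a : ι → G), (∀ i, a i ∈ K) ∧ (⨆ i, zmultiples (a i)) = K ∧
    iSupIndep (fun i => zmultiples (a i))

/-- `K` is a `p`-pure subgroup: `pⁿG ∩ K = pⁿK`. -/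
def IsPure (p : ℕ) {G : Type*} [AddCommGroup G] (K : AddSubgroup G) : Prop :=
  ∀ n : ℕ, ∀ x ∈ K, (∃ y : G, p ^ n • y = x) → ∃ z ∈ K, p ^ n • z = x

/-- The quotient `G/K` is divisible (equivalently `G = K + pG`). -/
def QuotDivisible (p : ℕ) {G : Type*} [AddCommGroup G] (K : AddSubgroup G) : Prop :=
  ∀ x : G, ∃ y : G, x - p • y ∈ K

/-- The Ulm sequence of `x` has a gap before index `k` (with `h₋₁ = -1`). -/
def HasGapBefore (p : ℕ) {G : Type*} [AddCommGroup G] (x : G) (k : ℕ) : Prop :=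
  if k = 0 then 0 < pHeight p x
  else pHeight p (p ^ (k - 1) • x) + 1 < pHeight p (p ^ k • x)

/-- Heights do not decrease under endomorphisms. -/
lemma pHeight_le_apply (p : ℕ) {G : Type*} [AddCommGroup G] (g : G →+ G) (x : G) :
    pHeight p x ≤ pHeight p (g x) := by
  apply sSup_le_sSup
  rintro t ⟨m, rfl, y, hy⟩
  exact ⟨m, rfl, g y, by rw [← map_nsmul, hy]⟩

/-- From a direct sum decomposition of `H` into cyclic groups, build an endomorphism of `H`
sending the generator `z i₀` to any element `w ∈ H` annihilated by everything
annihilating `z i₀`. -/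
lemma exists_endo_of_cyclics {G : Type*} [AddCommGroup G] {n : ℕ} (z : Fin n → G)
    (hind : iSupIndep (fun i => zmultiples (z i)))
    (H : AddSubgroup G) (hH : H = ⨆ i, zmultiples (z i))
    (i₀ : Fin n) (hz : z i₀ ∈ H) (w : G) (hwH : w ∈ H)
    (hw : ∀ k : ℤ, k • z i₀ = 0 → k • w = 0) :
    ∃ f : H →+ H, (f ⟨z i₀, hz⟩ : G) = w := by
  classical
  set S : Fin n → Submodule ℤ G := fun i => AddSubgroup.toIntSubmodule (zmultiples (z i))
    with hSdef
  have hindS : iSupIndep S :=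
    (iSupIndep_map_orderIso_iff (AddSubgroup.toIntSubmodule : AddSubgroup G ≃o _)).mpr hind
  have hHS : AddSubgroup.toIntSubmodule H = ⨆ i, S i := by
    rw [hH]
    exact OrderIso.map_iSup _ _
  set L : (Π₀ i, S i) →ₗ[ℤ] G := DFinsupp.lsum ℕ (fun i => (S i).subtype) with hLdef
  have hLinj : Function.Injective L := hindS.dfinsupp_lsum_injective
  have hmem : ∀ d : Π₀ i, S i, L d ∈ H := by
    intro d
    have : L d ∈ ⨆ i, S i := (Submodule.mem_iSup_iff_exists_dfinsupp S (L d)).mpr ⟨d, rfl⟩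
    rw [← hHS] at this
    exact this
  set Ψ : (Π₀ i, S i) →+ H := AddMonoidHom.codRestrict L.toAddMonoidHom H hmem with hΨdef
  have hΨcoe : ∀ d, (Ψ d : G) = L d := fun d => rfl
  have hΨinj : Function.Injective Ψ := by
    intro a b h
    exact hLinj (congrArg Subtype.val h)
  have hΨsurj : Function.Surjective Ψ := by
    intro x
    have hx : (x : G) ∈ ⨆ i, S i := by
      rw [← hHS]; exact x.2
    obtain ⟨d, hd⟩ := (Submodule.mem_iSup_iff_exists_dfinsupp S _).mp hx
    exact ⟨d, Subtype.ext hd⟩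
  set e : (Π₀ i, S i) ≃+ H := AddEquiv.ofBijective Ψ ⟨hΨinj, hΨsurj⟩ with hedef
  -- the cyclic hom on the `i₀` component
  have hmemS : z i₀ ∈ S i₀ := mem_zmultiples (z i₀)
  set a : S i₀ := ⟨z i₀, hmemS⟩ with hadef
  have hcyc : ∀ x : S i₀, ∃ k : ℤ, k • z i₀ = (x : G) := fun x => mem_zmultiples_iff.mp x.2
  choose c hc using hcyc
  set wH : H := ⟨w, hwH⟩ with hwHdef
  have hkey : ∀ k k' : ℤ, k • z i₀ = k' • z i₀ → k • w = k' • w := by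
    intro k k' hkk
    have h1 : (k - k') • z i₀ = 0 := by rw [sub_zsmul, hkk, add_neg_cancel]
    have h2 := hw _ h1
    rw [sub_zsmul] at h2
    exact add_neg_eq_zero.mp h2
  set ψ₀ : S i₀ →+ H :=
    { toFun := fun x => c x • wH
      map_zero' := by
        apply Subtype.ext
        show c (0 : S i₀) • w = (0 : G)
        have h0 : c (0 : S i₀) • z i₀ = (0 : ℤ) • z i₀ := by
          rw [hc, zero_zsmul]; rfl
        rw [hkey _ _ h0, zero_zsmul]
      map_add' := by
        intro x y
        apply Subtype.ext
        show c (x + y) • w = ((c x • wH + c y • wH : H) : G)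
        have h0 : c (x + y) • z i₀ = (c x + c y) • z i₀ := by
          rw [hc, add_zsmul, hc, hc]; rfl
        rw [hkey _ _ h0, add_zsmul]
        rfl } with hψ₀def
  have hψ₀a : ψ₀ a = wH := by
    apply Subtype.ext
    show c a • w = w
    have h0 : c a • z i₀ = (1 : ℤ) • z i₀ := by rw [hc, one_zsmul]
    rw [hkey _ _ h0, one_zsmul]
  set ψ : ∀ i, S i →+ H := Function.update (fun i => (0 : S i →+ H)) i₀ ψ₀ with hψdef
  refine ⟨(DFinsupp.sumAddHom ψ).comp e.symm.toAddMonoidHom, ?_⟩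
  have h1 : e (DFinsupp.single i₀ a) = ⟨z i₀, hz⟩ := by
    apply Subtype.ext
    show (Ψ (DFinsupp.single i₀ a) : G) = z i₀
    rw [hΨcoe, hLdef]
    simp [DFinsupp.lsum_single]
    rfl
  have h2 : e.symm ⟨z i₀, hz⟩ = DFinsupp.single i₀ a := by
    rw [AddEquiv.symm_apply_eq, h1]
  show ((DFinsupp.sumAddHom ψ) (e.symm ⟨z i₀, hz⟩) : G) = w
  rw [h2, DFinsupp.sumAddHom_single, hψdef, Function.update_self, hψ₀a]

theorem stmt14 {G : Type*} [AddCommGroup G] (p : ℕ) (hp : p.Prime) (hG : IsPGrp p G)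
    (n : ℕ) (z : Fin n → G) (e : Fin n → ℕ) (hord : ∀ i, addOrderOf (z i) = p ^ e i)
    (hind : iSupIndep (fun i => zmultiples (z i)))
    (H : AddSubgroup G) (hH : H = ⨆ i, zmultiples (z i))
    (hUlm : ∀ x ∈ H, (∀ m : ℕ, ∃ y : G, p ^ m • y = x) → x = 0)
    (hW : InW H) :
    ∀ i j, e j ≤ e i →
      (∀ k : ℕ, pHeight p (p ^ k • z i) ≤ pHeight p (p ^ k • z j)) ∧
      (∀ k : ℕ, pHeight p (p ^ k • z j) ≤ pHeight p (p ^ k • (p ^ (e i - e j) • z i))) := by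
  intro i j hji
  have hzH : ∀ i, z i ∈ H := fun i => by
    rw [hH]
    exact (le_iSup (fun i => zmultiples (z i)) i) (mem_zmultiples (z i))
  have hdvd : ∀ i (k : ℤ), k • z i = 0 → ((p ^ e i : ℕ) : ℤ) ∣ k := by
    intro i k hk
    rw [← hord i]
    exact addOrderOf_dvd_iff_zsmul_eq_zero.mpr hk
  have hzero : ∀ i (k : ℤ), ((p ^ e i : ℕ) : ℤ) ∣ k → k • z i = 0 := by
    intro i k hk
    rw [← hord i] at hk
    exact addOrderOf_dvd_iff_zsmul_eq_zero.mp hk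
  constructor
  · -- f : z i ↦ z j
    have hw : ∀ k : ℤ, k • z i = 0 → k • z j = 0 := by
      intro k hk
      refine hzero j k ?_
      refine dvd_trans ?_ (hdvd i k hk)
      exact_mod_cast pow_dvd_pow p hji
    obtain ⟨f, hf⟩ := exists_endo_of_cyclics z hind H hH i (hzH i) (z j) (hzH j) hw
    obtain ⟨g, hg⟩ := hW f
    have hgz : g (z i) = z j := by
      have := hg ⟨z i, hzH i⟩
      simpa [hf] using this
    intro k
    have := pHeight_le_apply p g (p ^ k • z i)
    rwa [map_nsmul, hgz] at this
  · -- f : z j ↦ p^(e i - e j) • z i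
    set w : G := p ^ (e i - e j) • z i with hwdef
    have hwH' : w ∈ H := H.nsmul_mem (hzH i) _
    have hw0 : ((p ^ e j : ℕ) : ℤ) • w = 0 := by
      rw [natCast_zsmul, hwdef, ← mul_nsmul, ← pow_add, Nat.sub_add_cancel hji, ← hord i]
      exact addOrderOf_nsmul_eq_zero (z i)
    have hw : ∀ k : ℤ, k • z j = 0 → k • w = 0 := by
      intro k hk
      obtain ⟨m, hm⟩ := hdvd j k hk
      rw [hm, mul_comm, mul_zsmul, hw0, smul_zero]
    obtain ⟨f, hf⟩ := exists_endo_of_cyclics z hind H hH j (hzH j) w hwH' hw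
    obtain ⟨g, hg⟩ := hW f
    have hgz : g (z j) = w := by
      have := hg ⟨z j, hzH j⟩
      simpa [hf] using this
    intro k
    have := pHeight_le_apply p g (p ^ k • z j)
    rwa [map_nsmul, hgz] at this
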